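/- The tensor rank of the multiplication tensor of the field F_{q^n} viewed as an n-dimensional algebra over F_q is at least 2n − 1. -/

import Mathlib

/-- The tensor rank of an algebra `(V, ∘)` over `K`: the minimum number `R` of pure tensors
`a^∨ ⊗ b^∨ ⊗ z` summing to its multiplication tensor, i.e. the minimum `R` such that
`x ∘ y = Σ_{j=1}^R a_j(x) b_j(y) z_j` for all `x, y`. -/
noncomputable def algTensorRank {K : Type*} [Field K] {V : Type*} [AddCommGroup V]
    [Module K V] (mul : V →ₗ[K] V →ₗ[K] V) : ℕ :=
  sInf {R | ∃ (a b : Fin R → Module.Dual K V) (z : Fin R → V),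
    ∀ x y, mul x y = ∑ j, (a j x * b j y) • z j}

/-- The tensor rank of the multiplication tensor of the field `F_{q^n}`,
viewed as an `n`-dimensional algebra over `F_q`, is at least `2n − 1`. -/
theorem stmt_17 {K L : Type*} [Field K] [Field L] [Fintype K] [Fintype L] [Algebra K L] :
    2 * Module.finrank K L - 1 ≤ algTensorRank (LinearMap.mul K L) := by
  classical
  have hfin : Module.Finite K L := Module.Finite.of_finite
  set n := Module.finrank K L with hn
  have hn1 : 1 ≤ n := Module.finrank_pos
  -- Nonemptiness: the trivial rank-n² decomposition via a basis.
  have hne : {R | ∃ (a b : Fin R → Module.Dual K L) (z : Fin R → L),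
      ∀ x y, (LinearMap.mul K L) x y = ∑ j, (a j x * b j y) • z j}.Nonempty := by
    obtain ⟨B⟩ : Nonempty (Module.Basis (Fin n) K L) := ⟨Module.finBasis K L⟩
    refine ⟨n * n, fun j => B.coord (finProdFinEquiv.symm j).1,
      fun j => B.coord (finProdFinEquiv.symm j).2,
      fun j => B (finProdFinEquiv.symm j).1 * B (finProdFinEquiv.symm j).2, ?_⟩
    intro x y
    rw [LinearMap.mul_apply']
    rw [← Equiv.sum_comp finProdFinEquiv
      (fun j => (B.coord (finProdFinEquiv.symm j).1 x * B.coord (finProdFinEquiv.symm j).2 y) •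
        (B (finProdFinEquiv.symm j).1 * B (finProdFinEquiv.symm j).2))]
    simp only [Equiv.symm_apply_apply, Module.Basis.coord_apply]
    rw [Fintype.sum_prod_type]
    calc x * y = (∑ i, B.repr x i • B i) * (∑ k, B.repr y k • B k) := by
          rw [B.sum_repr, B.sum_repr]
      _ = ∑ i, ∑ k, (B.repr x i * B.repr y k) • (B i * B k) := by
          rw [Finset.sum_mul]
          refine Finset.sum_congr rfl fun i _ => ?_
          rw [Finset.mul_sum]
          refine Finset.sum_congr rfl fun k _ => ?_
          rw [smul_mul_assoc, mul_smul_comm, smul_smul]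
  refine le_csInf hne ?_
  rintro R ⟨a, b, z, h⟩
  -- Step 1: find x ≠ 0 with a j x = 0 for all j with (j : ℕ) < n - 1.
  let T := {j : Fin R // (j : ℕ) < n - 1}
  have hcardT : Fintype.card T ≤ n - 1 := by
    have := Fintype.card_le_of_injective (fun t : T => (⟨t.1, t.2⟩ : Fin (n - 1)))
      (fun t1 t2 ht => by
        apply Subtype.ext; apply Fin.ext
        simpa [Fin.mk.injEq] using ht)
    simpa using this
  let φ : L →ₗ[K] (T → K) := LinearMap.pi (fun t => a t.1)
  have hker : LinearMap.ker φ ≠ ⊥ := by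
    intro hk
    have hinj := LinearMap.ker_eq_bot.mp hk
    have hle := LinearMap.finrank_le_finrank_of_injective hinj
    rw [Module.finrank_pi] at hle
    omega
  obtain ⟨x, hx, hx0⟩ := (Submodule.ne_bot_iff _).mp hker
  have hax : ∀ j : Fin R, (j : ℕ) < n - 1 → a j x = 0 := fun j hj => by
    have := LinearMap.mem_ker.mp hx
    exact congrFun this ⟨j, hj⟩
  -- Step 2: the z j with (j : ℕ) ≥ n - 1 span L.
  let Sc : Finset (Fin R) := Finset.univ.filter (fun j => ¬ (j : ℕ) < n - 1)
  have hspan : (⊤ : Submodule K L) ≤ Submodule.span K ((Sc.image z : Finset L) : Set L) := by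
    intro w _
    have hw : w = x * (x⁻¹ * w) := by field_simp
    have hxy := h x (x⁻¹ * w)
    rw [LinearMap.mul_apply'] at hxy
    rw [hw, hxy]
    refine Submodule.sum_mem _ fun j _ => ?_
    by_cases hj : (j : ℕ) < n - 1
    · rw [hax j hj, zero_mul, zero_smul]
      exact Submodule.zero_mem _
    · refine Submodule.smul_mem _ _ (Submodule.subset_span ?_)
      simp only [Finset.coe_image, Set.mem_image, Finset.mem_coe, Finset.mem_filter,
        Finset.mem_univ, true_and, Sc]
      exact ⟨j, hj, rfl⟩
  have hsp : Submodule.span K ((Sc.image z : Finset L) : Set L) = ⊤ :=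
    le_antisymm le_top hspan
  have h1 : n ≤ Sc.card := by
    have h2 := finrank_span_finset_le_card (R := K) (Sc.image z)
    rw [Set.finrank] at h2
    rw [hsp, finrank_top] at h2
    exact le_trans h2 (Finset.card_image_le)
  have hRcard : Sc.card ≤ R := by
    simpa using Finset.card_le_univ Sc
  have hmR : n - 1 ≤ R := by omega
  have hTc : n - 1 ≤ (Finset.univ.filter (fun j : Fin R => (j : ℕ) < n - 1)).card := by
    have := Finset.card_le_card_of_injOn (f := fun i : Fin (n - 1) => Fin.castLE hmR i)
      (s := Finset.univ) (t := Finset.univ.filter (fun j : Fin R => (j : ℕ) < n - 1))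
      (fun i _ => by simp)
      (fun i _ j _ hij => Fin.castLE_injective _ hij)
    simpa using this
  have hsum := Finset.card_filter_add_card_filter_not
    (s := (Finset.univ : Finset (Fin R))) (p := fun j : Fin R => (j : ℕ) < n - 1)
  simp only [Finset.card_univ, Fintype.card_fin] at hsum
  have hScEq : (Finset.filter (fun a : Fin R => ¬ (a : ℕ) < n - 1) Finset.univ).card = Sc.card :=
    rfl
  rw [hScEq] at hsum
  omega
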